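/- Let R,S be two infinitesimally-close points of a generic configuration P of n points, let L be the line through R and S, and let P' = P∖{R,S}. For P,Q ∈ P' : if L does not separate P and Q then n_P(P,Q) ≡ n_{P'}(P,Q) (mod 2), and if L separates P and Q then n_P(P,Q) ≡ n_{P'}(P,Q) + 1 (mod 2). Consequently P ∼_P Q iff P ∼_{P'} Q in the first case, and P ∼_P Q iff P ≁_{P'} Q in the second case. -/

import Mathlib

open scoped Classical

noncomputable section

/-- Orientation determinant of two vectors in the plane. -/
def det2 (u v : ℝ × ℝ) : ℝ := u.1 * v.2 - u.2 * v.1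

/-- The line through `A` and `B` separates the points `P` and `Q`
(they lie in distinct open half-planes determined by the line). -/
def SepLine (A B P Q : ℝ × ℝ) : Prop :=
  det2 (B - A) (P - A) * det2 (B - A) (Q - A) < 0

/-- A finite planar point set is a generic configuration if no three of its
points are collinear. -/
def Generic (C : Finset (ℝ × ℝ)) : Prop :=
  ∀ a ∈ C, ∀ b ∈ C, ∀ c ∈ C, a ≠ b → a ≠ c → b ≠ c →
    ¬ Collinear ℝ ({a, b, c} : Set (ℝ × ℝ))

/-- `nsep C P Q` is the number of lines spanned by (unordered) pairs of points of
`C \ {P,Q}` that separate `P` from `Q`. -/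
def nsep (C : Finset (ℝ × ℝ)) (P Q : ℝ × ℝ) : ℕ :=
  (((C \ {P, Q}).powersetCard 2).filter
    (fun s => ∃ A ∈ s, ∃ B ∈ s, A ≠ B ∧ SepLine A B P Q)).card

/-- The Orchard relation: `P ∼ Q` iff `n(P,Q) ≡ n - 3 (mod 2)` where `n = |C|`. -/
def Orchard (C : Finset (ℝ × ℝ)) (P Q : ℝ × ℝ) : Prop :=
  (nsep C P Q : ℤ) ≡ (C.card : ℤ) - 3 [ZMOD 2]

/-- A configuration is monochromatic if all its points are Orchard-equivalent. -/
def Mono (C : Finset (ℝ × ℝ)) : Prop :=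
  ∀ P ∈ C, ∀ Q ∈ C, P ≠ Q → Orchard C P Q

/-- A configuration is in convex position if each of its points is a vertex of
the convex hull. -/
def ConvexPos (C : Finset (ℝ × ℝ)) : Prop :=
  ∀ P ∈ C, P ∉ convexHull ℝ ((C : Set (ℝ × ℝ)) \ {P})

set_option maxHeartbeats 1600000 in
private lemma card_split4' {α : Type*} (F : Finset α) (p q : α → Prop)
    [DecidablePred p] [DecidablePred q] :
    F.card = (F.filter (fun s => p s ∧ q s)).card +
      (F.filter (fun s => p s ∧ ¬ q s)).card +
      ((F.filter (fun s => ¬ p s ∧ q s)).card +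
      (F.filter (fun s => ¬ p s ∧ ¬ q s)).card) := by
  have h1 := Finset.card_filter_add_card_filter_not (s := F) (p := p)
  have h2 := Finset.card_filter_add_card_filter_not
    (s := F.filter p) (p := q)
  have h3 := Finset.card_filter_add_card_filter_not
    (s := F.filter (fun a => ¬ p a)) (p := q)
  rw [Finset.filter_filter, Finset.filter_filter] at h2 h3
  omega

set_option maxHeartbeats 1600000 in
private lemma counting_abstract {α : Type*} [DecidableEq α] (D : Finset α)
    (sep : α → α → Prop) [∀ a b : α, Decidable (sep a b)]
    (hsymm : ∀ a b, sep a b ↔ sep b a)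
    (R S : α) (hRD : R ∈ D) (hSD : S ∈ D) (hRS : R ≠ S)
    (hkey : ∀ X ∈ D, X ≠ R → X ≠ S → (sep R X ↔ sep S X)) :
    ((D.powersetCard 2).filter (fun s => ∃ A ∈ s, ∃ B ∈ s, A ≠ B ∧ sep A B)).card
    = (((D \ {R, S}).powersetCard 2).filter
        (fun s => ∃ A ∈ s, ∃ B ∈ s, A ≠ B ∧ sep A B)).card
      + 2 * ((D \ {R, S}).filter (fun X => sep R X)).card
      + (if sep R S then 1 else 0) := by
  set pred : Finset α → Prop := fun s => ∃ A ∈ s, ∃ B ∈ s, A ≠ B ∧ sep A B with hpred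
  set D' : Finset α := D \ {R, S} with hD'
  set F : Finset (Finset α) := (D.powersetCard 2).filter pred with hF
  have hmemD' : ∀ x, x ∈ D' ↔ x ∈ D ∧ x ≠ R ∧ x ≠ S := by
    intro x
    simp [hD', Finset.mem_sdiff, Finset.mem_insert, Finset.mem_singleton, not_or]
  have split := card_split4' F (fun s => R ∈ s) (fun s => S ∈ s)
  -- any 2-set containing R and S is {R,S}
  have hpair : ∀ s ∈ F, R ∈ s → S ∈ s → s = {R, S} := by
    intro s hs hRs hSs
    obtain ⟨hsp, -⟩ := Finset.mem_filter.1 hs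
    obtain ⟨-, hcard⟩ := Finset.mem_powersetCard.1 hsp
    have hsub : ({R, S} : Finset α) ⊆ s := by
      intro x hx
      rcases Finset.mem_insert.1 hx with rfl | hx
      · exact hRs
      · rw [Finset.mem_singleton] at hx; subst hx; exact hSs
    have hc2 : ({R, S} : Finset α).card = 2 := by
      rw [Finset.card_insert_of_notMem (by simp [hRS]), Finset.card_singleton]
    exact (Finset.eq_of_subset_of_card_le hsub (by omega)).symm
  have hpredRS : pred {R, S} ↔ sep R S := by
    constructor
    · rintro ⟨A, hA, B, hB, hAB, hsep⟩
      simp only [Finset.mem_insert, Finset.mem_singleton] at hA hB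
      rcases hA with rfl | rfl <;> rcases hB with rfl | rfl
      · exact absurd rfl hAB
      · exact hsep
      · exact (hsymm _ _).1 hsep
      · exact absurd rfl hAB
    · intro hsep
      exact ⟨R, by simp, S, by simp, hRS, hsep⟩
  have hRSpart : (F.filter (fun s => R ∈ s ∧ S ∈ s)).card
      = (if sep R S then 1 else 0) := by
    by_cases hsep : sep R S
    · rw [if_pos hsep, Finset.card_eq_one]
      refine ⟨{R, S}, ?_⟩
      ext s
      simp only [Finset.mem_filter, Finset.mem_singleton]
      constructor
      · rintro ⟨hs, hRs, hSs⟩; exact hpair s hs hRs hSs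
      · rintro rfl
        refine ⟨Finset.mem_filter.2 ⟨?_, hpredRS.2 hsep⟩, by simp, by simp⟩
        refine Finset.mem_powersetCard.2 ⟨?_, ?_⟩
        · simp [Finset.insert_subset_iff, hRD, hSD]
        · rw [Finset.card_insert_of_notMem (by simp [hRS]), Finset.card_singleton]
    · rw [if_neg hsep, Finset.card_eq_zero, Finset.filter_eq_empty_iff]
      rintro s hs ⟨hRs, hSs⟩
      have := hpair s hs hRs hSs; subst this
      exact hsep (hpredRS.1 (Finset.mem_filter.1 hs).2)
  -- the part avoiding R and S
  have h0part : F.filter (fun s => ¬ R ∈ s ∧ ¬ S ∈ s)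
      = (D'.powersetCard 2).filter pred := by
    ext s
    simp only [hF, Finset.filter_filter, Finset.mem_filter, Finset.mem_powersetCard,
      hD', Finset.subset_sdiff, Finset.disjoint_insert_right,
      Finset.disjoint_singleton_right]
    tauto
  -- the one-point parts
  have hRonly : ∀ (T U : α), T ∈ D → T = R ∨ T = S → U = R ∨ U = S → T ≠ U →
      (F.filter (fun s => T ∈ s ∧ ¬ U ∈ s)).card
      = (D'.filter (fun X => sep T X)).card := by
    intro T U hTD hT hU hTU
    symm
    apply Finset.card_bij (fun X _ => ({T, X} : Finset α))
    · intro X hX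
      obtain ⟨hXD', hsep⟩ := Finset.mem_filter.1 hX
      obtain ⟨hXD, hXR, hXS⟩ := (hmemD' X).1 hXD'
      have hXT : X ≠ T := by rcases hT with rfl | rfl; exacts [hXR, hXS]
      have hXU : X ≠ U := by rcases hU with rfl | rfl; exacts [hXR, hXS]
      refine Finset.mem_filter.2 ⟨Finset.mem_filter.2 ⟨?_, ?_⟩, by simp, ?_⟩
      · refine Finset.mem_powersetCard.2 ⟨?_, ?_⟩
        · simp [Finset.insert_subset_iff, hTD, hXD]
        · rw [Finset.card_insert_of_notMem (by simp [Ne.symm hXT]),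
            Finset.card_singleton]
      · exact ⟨T, by simp, X, by simp, Ne.symm hXT, hsep⟩
      · simp only [Finset.mem_insert, Finset.mem_singleton]
        push_neg
        exact ⟨Ne.symm hTU, Ne.symm hXU⟩
    · intro X hX X' hX' h
      have hmem : X ∈ ({T, X'} : Finset α) := by rw [← h]; simp
      obtain ⟨hXD', -⟩ := Finset.mem_filter.1 hX
      obtain ⟨-, hXR, hXS⟩ := (hmemD' X).1 hXD'
      have hXT : X ≠ T := by rcases hT with rfl | rfl; exacts [hXR, hXS]
      rcases Finset.mem_insert.1 hmem with h' | h'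
      · exact absurd h' hXT
      · exact Finset.mem_singleton.1 h'
    · intro s hs
      obtain ⟨hsF, hTs, hUs⟩ := Finset.mem_filter.1 hs
      obtain ⟨hsp, hpreds⟩ := Finset.mem_filter.1 hsF
      obtain ⟨hsub, hcard⟩ := Finset.mem_powersetCard.1 hsp
      obtain ⟨a, b, hab, rfl⟩ := Finset.card_eq_two.1 hcard
      have hTmem := hTs
      simp only [Finset.mem_insert, Finset.mem_singleton] at hTmem
      obtain ⟨X, hXeq, hXT⟩ : ∃ X, ({a, b} : Finset α) = {T, X} ∧ X ≠ T := by
        rcases hTmem with rfl | rfl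
        · exact ⟨b, rfl, Ne.symm hab⟩
        · refine ⟨a, ?_, hab⟩
          ext x; simp only [Finset.mem_insert, Finset.mem_singleton]; tauto
      have hXs : X ∈ ({a, b} : Finset α) := by rw [hXeq]; simp
      have hXD : X ∈ D := hsub hXs
      have hXU : X ≠ U := fun h => hUs (h ▸ hXs)
      have hXRS : X ≠ R ∧ X ≠ S := by
        rcases hT with rfl | rfl <;> rcases hU with rfl | rfl
        · exact absurd rfl hTU
        · exact ⟨hXT, hXU⟩
        · exact ⟨hXU, hXT⟩
        · exact absurd rfl hTU
      have hsepTX : sep T X := by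
        obtain ⟨A, hA, B, hB, hAB, hsep⟩ := hpreds
        rw [hXeq] at hA hB
        simp only [Finset.mem_insert, Finset.mem_singleton] at hA hB
        rcases hA with rfl | rfl <;> rcases hB with rfl | rfl
        · exact absurd rfl hAB
        · exact hsep
        · exact (hsymm _ _).1 hsep
        · exact absurd rfl hAB
      exact ⟨X, Finset.mem_filter.2 ⟨(hmemD' X).2 ⟨hXD, hXRS⟩, hsepTX⟩, hXeq.symm⟩
  have hmid : D'.filter (fun X => sep R X) = D'.filter (fun X => sep S X) := by
    apply Finset.filter_congr
    intro X hXD'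
    obtain ⟨hXD, hXR, hXS⟩ := (hmemD' X).1 hXD'
    exact hkey X hXD hXR hXS
  have eR := hRonly R S hRD (Or.inl rfl) (Or.inr rfl) hRS
  have eS := hRonly S R hSD (Or.inr rfl) (Or.inl rfl) (Ne.symm hRS)
  have eSS : (F.filter (fun s => ¬ R ∈ s ∧ S ∈ s)).card
      = (F.filter (fun s => S ∈ s ∧ ¬ R ∈ s)).card := by
    congr 1
    apply Finset.filter_congr
    intro s _
    tauto
  rw [hRSpart, eR, eSS, eS, ← hmid] at split
  have h0c : (F.filter (fun s => ¬ R ∈ s ∧ ¬ S ∈ s)).card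
      = ((D'.powersetCard 2).filter pred).card := by rw [h0part]
  rw [h0c] at split
  have hgoal : (Finset.filter (fun s => ∃ A ∈ s, ∃ B ∈ s, A ≠ B ∧ sep A B)
      (Finset.powersetCard 2 D')).card
      = (Finset.filter pred (Finset.powersetCard 2 D')).card := rfl
  rw [hgoal]
  by_cases hsep : sep R S
  · rw [if_pos hsep] at split ⊢; omega
  · rw [if_neg hsep] at split ⊢; omega

private lemma det2_zero_collinear {a b c : ℝ × ℝ} (hab : b ≠ a)
    (h : det2 (b - a) (c - a) = 0) :
    Collinear ℝ ({a, b, c} : Set (ℝ × ℝ)) := by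
  simp only [det2, Prod.fst_sub, Prod.snd_sub] at h
  rw [collinear_iff_of_mem (Set.mem_insert a {b, c})]
  refine ⟨b - a, ?_⟩
  rintro p (rfl | rfl | hp)
  · exact ⟨0, by simp⟩
  · exact ⟨1, by simp⟩
  · rw [Set.mem_singleton_iff] at hp; subst hp
    by_cases h1 : b.1 - a.1 = 0
    · have h2 : b.2 - a.2 ≠ 0 := fun h2 => hab (by ext <;> linarith)
      have hc1 : p.1 - a.1 = 0 := by
        rw [h1] at h; simp only [zero_mul, zero_sub, neg_eq_zero, mul_eq_zero] at h
        tauto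
      refine ⟨(p.2 - a.2) / (b.2 - a.2), ?_⟩
      have : ((p.2 - a.2) / (b.2 - a.2)) • (b - a) +ᵥ a =
          (((p.2 - a.2) / (b.2 - a.2)) * (b.1 - a.1) + a.1,
           ((p.2 - a.2) / (b.2 - a.2)) * (b.2 - a.2) + a.2) := rfl
      rw [this]; ext
      · simp only; rw [h1]; simpa using by linarith
      · simp only; field_simp; ring
    · refine ⟨(p.1 - a.1) / (b.1 - a.1), ?_⟩
      have : ((p.1 - a.1) / (b.1 - a.1)) • (b - a) +ᵥ a =
          (((p.1 - a.1) / (b.1 - a.1)) * (b.1 - a.1) + a.1,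
           ((p.1 - a.1) / (b.1 - a.1)) * (b.2 - a.2) + a.2) := rfl
      rw [this]; ext
      · simp only; field_simp; ring
      · simp only; field_simp; nlinarith [h]

private lemma sepline_comm {A B P Q : ℝ × ℝ} : SepLine A B P Q ↔ SepLine B A P Q := by
  unfold SepLine
  have : det2 (A - B) (P - B) * det2 (A - B) (Q - B)
      = det2 (B - A) (P - A) * det2 (B - A) (Q - A) := by
    simp only [det2, Prod.fst_sub, Prod.snd_sub]; ring
  rw [this]

private lemma det2_cyc (X R P : ℝ × ℝ) : det2 (X - R) (P - R) = det2 (P - X) (R - X) := by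
  simp only [det2, Prod.fst_sub, Prod.snd_sub]; ring

private lemma key_sign {a a' b b' : ℝ} (ha : a ≠ 0) (ha' : a' ≠ 0) (hb : b ≠ 0) (hb' : b' ≠ 0)
    (h1 : 0 ≤ a * a') (h2 : 0 ≤ b * b') : (a * b < 0 ↔ a' * b' < 0) := by
  have haa : 0 < a * a' := lt_of_le_of_ne h1 (Ne.symm (mul_ne_zero ha ha'))
  have hbb : 0 < b * b' := lt_of_le_of_ne h2 (Ne.symm (mul_ne_zero hb hb'))
  constructor <;> intro h <;> nlinarith [haa, hbb, h]

private lemma key_iff {X P Q R S : ℝ × ℝ}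
    (hXP : X ≠ P) (hXQ : X ≠ Q)
    (cXPR : ¬ Collinear ℝ ({X, P, R} : Set (ℝ × ℝ)))
    (cXPS : ¬ Collinear ℝ ({X, P, S} : Set (ℝ × ℝ)))
    (cXQR : ¬ Collinear ℝ ({X, Q, R} : Set (ℝ × ℝ)))
    (cXQS : ¬ Collinear ℝ ({X, Q, S} : Set (ℝ × ℝ)))
    (nXP : ¬ SepLine X P R S) (nXQ : ¬ SepLine X Q R S) :
    (SepLine R X P Q ↔ SepLine S X P Q) := by
  unfold SepLine at *
  rw [det2_cyc X R P, det2_cyc X R Q, det2_cyc X S P, det2_cyc X S Q]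
  push_neg at nXP nXQ
  exact key_sign
    (fun h => cXPR (det2_zero_collinear (fun h' => hXP h'.symm) h))
    (fun h => cXPS (det2_zero_collinear (fun h' => hXP h'.symm) h))
    (fun h => cXQR (det2_zero_collinear (fun h' => hXQ h'.symm) h))
    (fun h => cXQS (det2_zero_collinear (fun h' => hXQ h'.symm) h))
    nXP nXQ

private lemma no_sep {C : Finset (ℝ × ℝ)} {R S : ℝ × ℝ} (hclose : nsep C R S = 0)
    {A B : ℝ × ℝ} (hA : A ∈ C \ {R, S}) (hB : B ∈ C \ {R, S}) (hAB : A ≠ B) :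
    ¬ SepLine A B R S := by
  intro hsep
  have hmem : ({A, B} : Finset (ℝ × ℝ)) ∈ ((C \ {R, S}).powersetCard 2).filter
      (fun s => ∃ A ∈ s, ∃ B ∈ s, A ≠ B ∧ SepLine A B R S) := by
    rw [Finset.mem_filter, Finset.mem_powersetCard]
    refine ⟨⟨?_, ?_⟩, A, by simp, B, by simp, hAB, hsep⟩
    · intro x hx
      rcases Finset.mem_insert.1 hx with rfl | hx
      · exact hA
      · rw [Finset.mem_singleton] at hx; subst hx; exact hB
    · rw [Finset.card_insert_of_notMem (by simp [hAB]), Finset.card_singleton]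
  rw [nsep] at hclose
  exact absurd hclose (by rw [Finset.card_eq_zero]; intro h; rw [h] at hmem; simp at hmem)
theorem infinitesimally_close_deletion (C : Finset (ℝ × ℝ)) (hC : Generic C)
    (R S : ℝ × ℝ) (hR : R ∈ C) (hS : S ∈ C) (hRS : R ≠ S)
    (hclose : nsep C R S = 0)
    (P Q : ℝ × ℝ) (hP : P ∈ C) (hQ : Q ∈ C) (hPQ : P ≠ Q)
    (hPout : P ≠ R ∧ P ≠ S) (hQout : Q ≠ R ∧ Q ≠ S) :
    (¬ SepLine R S P Q →
      ((nsep C P Q : ℤ) ≡ (nsep (C \ {R, S}) P Q : ℤ) [ZMOD 2] ∧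
        (Orchard C P Q ↔ Orchard (C \ {R, S}) P Q))) ∧
    (SepLine R S P Q →
      ((nsep C P Q : ℤ) ≡ (nsep (C \ {R, S}) P Q : ℤ) + 1 [ZMOD 2] ∧
        (Orchard C P Q ↔ ¬ Orchard (C \ {R, S}) P Q))) := by
  classical
  -- key geometric fact
  have hkey : ∀ X ∈ C \ {P, Q}, X ≠ R → X ≠ S →
      (SepLine R X P Q ↔ SepLine S X P Q) := by
    intro X hX hXR hXS
    rw [Finset.mem_sdiff, Finset.mem_insert, Finset.mem_singleton] at hX
    obtain ⟨hXC, hXPQ⟩ := hX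
    push_neg at hXPQ
    obtain ⟨hXP, hXQ⟩ := hXPQ
    have hXmem : X ∈ C \ {R, S} := by
      rw [Finset.mem_sdiff, Finset.mem_insert, Finset.mem_singleton]
      exact ⟨hXC, by push_neg; exact ⟨hXR, hXS⟩⟩
    have hPmem : P ∈ C \ {R, S} := by
      rw [Finset.mem_sdiff, Finset.mem_insert, Finset.mem_singleton]
      exact ⟨hP, by push_neg; exact hPout⟩
    have hQmem : Q ∈ C \ {R, S} := by
      rw [Finset.mem_sdiff, Finset.mem_insert, Finset.mem_singleton]
      exact ⟨hQ, by push_neg; exact hQout⟩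
    exact key_iff hXP hXQ
      (hC X hXC P hP R hR hXP hXR hPout.1)
      (hC X hXC P hP S hS hXP hXS hPout.2)
      (hC X hXC Q hQ R hR hXQ hXR hQout.1)
      (hC X hXC Q hQ S hS hXQ hXS hQout.2)
      (no_sep hclose hXmem hPmem hXP)
      (no_sep hclose hXmem hQmem hXQ)
  have hRD : R ∈ C \ {P, Q} := by
    rw [Finset.mem_sdiff, Finset.mem_insert, Finset.mem_singleton]
    exact ⟨hR, by push_neg; exact ⟨Ne.symm hPout.1, Ne.symm hQout.1⟩⟩
  have hSD : S ∈ C \ {P, Q} := by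
    rw [Finset.mem_sdiff, Finset.mem_insert, Finset.mem_singleton]
    exact ⟨hS, by push_neg; exact ⟨Ne.symm hPout.2, Ne.symm hQout.2⟩⟩
  have hcount := counting_abstract (C \ {P, Q}) (fun A B => SepLine A B P Q)
    (fun a b => sepline_comm) R S hRD hSD hRS hkey
  have hcomm : (C \ {R, S}) \ {P, Q} = (C \ {P, Q}) \ {R, S} := by
    ext x
    simp only [Finset.mem_sdiff, Finset.mem_insert, Finset.mem_singleton]
    tauto
  have e1 : nsep C P Q = (((C \ {P, Q}).powersetCard 2).filter
      (fun s => ∃ A ∈ s, ∃ B ∈ s, A ≠ B ∧ SepLine A B P Q)).card := rfl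
  have e2 : nsep (C \ {R, S}) P Q = ((((C \ {P, Q}) \ {R, S}).powersetCard 2).filter
      (fun s => ∃ A ∈ s, ∃ B ∈ s, A ≠ B ∧ SepLine A B P Q)).card := by
    rw [nsep, hcomm]
  rw [← e1, ← e2] at hcount
  -- cardinalities
  have hsub : ({R, S} : Finset (ℝ × ℝ)) ⊆ C := by
    intro x hx
    rcases Finset.mem_insert.1 hx with rfl | hx
    · exact hR
    · rw [Finset.mem_singleton] at hx; subst hx; exact hS
  have hcard2 : ({R, S} : Finset (ℝ × ℝ)).card = 2 := by
    rw [Finset.card_insert_of_notMem (by simp [hRS]), Finset.card_singleton]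
  have hcard : (C \ {R, S}).card + 2 = C.card := by
    rw [← hcard2]
    exact Finset.card_sdiff_add_card_eq_card hsub
  constructor
  · intro hnsep
    rw [if_neg hnsep] at hcount
    constructor
    · rw [Int.ModEq]; omega
    · simp only [Orchard, Int.ModEq]; omega
  · intro hsep
    rw [if_pos hsep] at hcount
    constructor
    · rw [Int.ModEq]; omega
    · simp only [Orchard, Int.ModEq]; omega
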